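/- For m ≥ 1, r ≥ 0 and 1 ≤ k ≤ n, the degenerate Whitney numbers satisfy the recurrence W_{m,r}(n+1,k|λ) = (r+mk) W_{m,r}(n,k|λ) + W_{m,r}(n,k-1|λ) − nλ W_{m,r}(n,k|λ). -/

import Mathlib

open Finset

/-- The λ-binomial coefficient `binom_λ(y,n) = y(y-λ)⋯(y-(n-1)λ)/n!`. -/
noncomputable def dbinom (lam y : ℝ) (n : ℕ) : ℝ :=
  (∏ i ∈ range n, (y - i * lam)) / n.factorial

/-- Degenerate Whitney numbers:
`W_{m,r}(n,k|λ) = (n!/(k! m^k)) ∑_{l=0}^k C(k,l)(-1)^{k-l} binom_λ(ml+r,n)`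
(this expression vanishes when `n < k`). -/
noncomputable def whitneyDeg (lam : ℝ) (m r n k : ℕ) : ℝ :=
  (n.factorial : ℝ) / ((k.factorial : ℝ) * (m : ℝ) ^ k) *
    ∑ l ∈ range (k + 1), (k.choose l : ℝ) * (-1) ^ (k - l) * dbinom lam (m * l + r) n

lemma nat_key (j l : ℕ) : (j+1).choose l * (j+1 - l) = (j+1) * j.choose l := by
  rw [← Nat.choose_succ_right_eq, ← Nat.add_one_mul_choose_eq]

lemma whitney_eq (lam : ℝ) (m r n k : ℕ) (hm : (m:ℝ) ≠ 0) :
    whitneyDeg lam m r n k =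
      (∑ l ∈ range (k+1), (k.choose l : ℝ) * (-1)^(k-l) *
        ∏ i ∈ range n, ((m*l + r : ℝ) - i*lam)) / ((k.factorial : ℝ) * (m:ℝ)^k) := by
  unfold whitneyDeg dbinom
  rw [Finset.sum_div, Finset.mul_sum]
  apply Finset.sum_congr rfl
  intro l _
  have hn : (n.factorial : ℝ) ≠ 0 := Nat.cast_ne_zero.mpr n.factorial_ne_zero
  have hkf : (k.factorial : ℝ) ≠ 0 := Nat.cast_ne_zero.mpr k.factorial_ne_zero
  have hmk : (m:ℝ)^k ≠ 0 := pow_ne_zero _ hm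
  field_simp
  ring_nf
  simp only [mul_comm]

lemma sum_key (lam : ℝ) (m r n j : ℕ) :
    (∑ l ∈ range (j+2), ((j+1).choose l : ℝ) * (-1)^(j+1-l) *
        ∏ i ∈ range (n+1), ((m*l + r : ℝ) - i*lam))
    = ((r:ℝ) + m*(j+1) - n*lam) *
        (∑ l ∈ range (j+2), ((j+1).choose l : ℝ) * (-1)^(j+1-l) *
          ∏ i ∈ range n, ((m*l + r : ℝ) - i*lam))
      + (m:ℝ)*(j+1) *
        (∑ l ∈ range (j+1), (j.choose l : ℝ) * (-1)^(j-l) *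
          ∏ i ∈ range n, ((m*l + r : ℝ) - i*lam)) := by
  have hext : (∑ l ∈ range (j+1), (j.choose l : ℝ) * (-1)^(j-l) *
          ∏ i ∈ range n, ((m*l + r : ℝ) - i*lam))
      = ∑ l ∈ range (j+2), (j.choose l : ℝ) * (-1)^(j-l) *
          ∏ i ∈ range n, ((m*l + r : ℝ) - i*lam) := by
    rw [Finset.sum_range_succ (n := j+1)]
    simp [Nat.choose_succ_self]
  rw [hext, Finset.mul_sum, Finset.mul_sum, ← Finset.sum_add_distrib]
  apply Finset.sum_congr rfl
  intro l hl
  rw [Finset.mem_range] at hl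
  rw [Finset.prod_range_succ]
  rcases Nat.lt_succ_iff_lt_or_eq.mp hl with hl' | rfl
  · -- l ≤ j
    have hle : l ≤ j := Nat.lt_succ_iff.mp hl'
    have hsub : j + 1 - l = (j - l) + 1 := by omega
    have hc : ((j+1).choose l : ℝ) * (((j:ℝ)+1) - l) = ((j:ℝ)+1) * (j.choose l : ℝ) := by
      have h := nat_key j l
      have hl1 : l ≤ j + 1 := by omega
      have hcast : ((j + 1 - l : ℕ) : ℝ) = ((j:ℝ)+1) - l := by
        push_cast [hl1]; ring
      calc ((j+1).choose l : ℝ) * (((j:ℝ)+1) - l)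
          = (((j+1).choose l * (j+1-l) : ℕ) : ℝ) := by rw [Nat.cast_mul, hcast]
        _ = _ := by rw [h]; push_cast; ring
    rw [hsub, pow_succ]
    linear_combination ((-1:ℝ)^(j-l) * (∏ i ∈ range n, ((m*l + r : ℝ) - i*lam)) * (m:ℝ)) * hc
  · -- l = j + 1
    simp [Nat.choose_succ_self]
    ring

theorem stmt15 (lam : ℝ) (m r n k : ℕ) (hm : 1 ≤ m) (hk : 1 ≤ k) (hkn : k ≤ n) :
    whitneyDeg lam m r (n + 1) k =
      ((r : ℝ) + (m : ℝ) * k) * whitneyDeg lam m r n k + whitneyDeg lam m r n (k - 1) -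
        (n : ℝ) * lam * whitneyDeg lam m r n k := by
  obtain ⟨j, rfl⟩ : ∃ j, k = j + 1 := ⟨k - 1, (Nat.succ_pred_eq_of_pos hk).symm⟩
  have hm0 : (m:ℝ) ≠ 0 := Nat.cast_ne_zero.mpr (by omega)
  simp only [Nat.add_sub_cancel]
  rw [whitney_eq lam m r (n+1) (j+1) hm0, whitney_eq lam m r n (j+1) hm0,
    whitney_eq lam m r n j hm0]
  have key := sum_key lam m r n j
  have hjf : ((j+1).factorial : ℝ) = ((j:ℝ)+1) * (j.factorial : ℝ) := by
    push_cast [Nat.factorial_succ]; ring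
  have hjf0 : (j.factorial : ℝ) ≠ 0 := Nat.cast_ne_zero.mpr j.factorial_ne_zero
  have hmj : (m:ℝ)^j ≠ 0 := pow_ne_zero _ hm0
  have hj1 : ((j:ℝ)+1) ≠ 0 := by positivity
  rw [hjf, pow_succ]
  rw [key]
  field_simp
  push_cast
  ring
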